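/- Let z ∈ D and g ∈ G∖G_∞ with g = n₁σma_t n₂. Then height(z) = (ρ(z, g^{-1}∞)/R(g))⁴ · height(gz), where height(ζ,v) = Re ζ − ¼|v|² and R(g) = t^{-1/4}. Consequently, z lies in the interior of the isometric sphere I(g) if and only if height(gz) > height(z). -/

import Mathlib

open RealInnerProductSpace

noncomputable section

/-- Conjugation in `C` relative to the unit element `e`: `conj ζ = 2⟪ζ,e⟫·e − ζ`. -/
def conjC {C : Type*} [NormedAddCommGroup C] [InnerProductSpace ℝ C] (e ζ : C) : C :=
  (2 * ⟪ζ, e⟫) • e - ζ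

/-- The inverse `ζ⁻¹ = ‖ζ‖⁻²·conj ζ` in `C`. -/
def cinvC {C : Type*} [NormedAddCommGroup C] [InnerProductSpace ℝ C] (e ζ : C) : C :=
  (‖ζ‖ ^ 2)⁻¹ • conjC e ζ

/-- Height function on the Siegel domain `D ⊂ C ⊕ V`:
`height (ζ, v) = Re ζ − ¼‖v‖²` with `Re ζ = ⟪ζ, e⟫`. -/
def heightD {C V : Type*} [NormedAddCommGroup C] [InnerProductSpace ℝ C]
    [NormedAddCommGroup V] (e : C) (p : C × V) : ℝ :=
  ⟪p.1, e⟫ - (1/4) * ‖p.2‖ ^ 2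

/-- Imaginary part `Im ζ = ζ − ⟪ζ,e⟫·e` in `C`. -/
def imC {C : Type*} [NormedAddCommGroup C] [InnerProductSpace ℝ C] (e ζ : C) : C :=
  ζ - ⟪ζ, e⟫ • e

/-- The Cygan metric on `D̄ ∖ {∞}` in `C ⊕ V` coordinates:
`ρ((ζ₁,v₁),(ζ₂,v₂)) = |¼|v₁|² + ¼|v₂|² + |height z₁ − height z₂| + Im ζ₁ − Im ζ₂
 − ½ β₂(v₁,v₂)|^{1/2}`. -/
def cyganD {C V : Type*} [NormedAddCommGroup C] [InnerProductSpace ℝ C]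
    [NormedAddCommGroup V] (e : C) (β₂ : V → V → C) (p q : C × V) : ℝ :=
  Real.sqrt ‖((1/4) * ‖p.2‖ ^ 2 + (1/4) * ‖q.2‖ ^ 2 + |heightD e p - heightD e q|) • e
      + imC e p.1 - imC e q.1 - (1/2 : ℝ) • β₂ p.2 q.2‖

/-- Action of `n_{(Z,X)} ∈ N` on `C ⊕ V` coordinates:
`n(ζ,v) = (¼|X|² + Z + ζ + ½β₂(v,X), X + v)`. -/
def nAct {C V : Type*} [NormedAddCommGroup C] [InnerProductSpace ℝ C]
    [NormedAddCommGroup V] [Module ℝ V] (e : C) (β₂ : V → V → C) (Z : C) (X : V)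
    (p : C × V) : C × V :=
  (((1/4) * ‖X‖ ^ 2) • e + Z + p.1 + (1/2 : ℝ) • β₂ p.2 X, X + p.2)

/-- Action of `a_t ∈ A`: `a_t(ζ,v) = (tζ, t^{1/2} v)`. -/
def aAct {C V : Type*} [NormedAddCommGroup C] [InnerProductSpace ℝ C]
    [NormedAddCommGroup V] [Module ℝ V] (t : ℝ) (p : C × V) : C × V :=
  (t • p.1, Real.sqrt t • p.2)

/-- Action of `m = (φ,ψ) ∈ M`: `m(ζ,v) = (φζ, ψv)`. -/
def mAct {C V : Type*} [NormedAddCommGroup C] [InnerProductSpace ℝ C]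
    [NormedAddCommGroup V] [Module ℝ V] (φ : C →ₗ[ℝ] C) (ψ : V →ₗ[ℝ] V)
    (p : C × V) : C × V :=
  (φ p.1, ψ p.2)

/-- The geodesic inversion `σ(ζ,v) = (ζ⁻¹, −ζ⁻¹ v)` in `C ⊕ V` coordinates. -/
def sigmaAct {C V : Type*} [NormedAddCommGroup C] [InnerProductSpace ℝ C]
    [NormedAddCommGroup V] [InnerProductSpace ℝ V] (e : C)
    (J : C →ₗ[ℝ] V →ₗ[ℝ] V) (p : C × V) : C × V :=
  (cinvC e p.1, - J (cinvC e p.1) p.2)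

section Aux

variable {C V : Type*} [NormedAddCommGroup C] [InnerProductSpace ℝ C]
  [NormedAddCommGroup V] [InnerProductSpace ℝ V]

/-- A norm-preserving linear map preserves real inner products. -/
lemma inner_map_of_norm {φ : C →ₗ[ℝ] C} (hφ : ∀ ζ, ‖φ ζ‖ = ‖ζ‖) (a b : C) :
    ⟪φ a, φ b⟫ = ⟪a, b⟫ := by
  rw [real_inner_eq_norm_add_mul_self_sub_norm_mul_self_sub_norm_mul_self_div_two,
    real_inner_eq_norm_add_mul_self_sub_norm_mul_self_sub_norm_mul_self_div_two a b,
    ← map_add, hφ, hφ, hφ]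

lemma height_nAct (e : C) (J : C →ₗ[ℝ] V →ₗ[ℝ] V) (he : ‖e‖ = 1)
    (hJe : ∀ v : V, J e v = v) (β₂ : V → V → C)
    (hβ : ∀ (v u : V) (ζ : C), ⟪β₂ v u, ζ⟫ = ⟪J ζ u, v⟫)
    (Z : C) (X : V) (hZ : ⟪Z, e⟫ = 0) (p : C × V) :
    heightD e (nAct e β₂ Z X p) = heightD e p := by
  simp only [heightD, nAct]
  rw [norm_add_sq_real]
  simp only [inner_add_left, real_inner_smul_left, hZ, hβ, hJe, real_inner_self_eq_norm_sq, he]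
  ring

lemma inner_conjC (e ζ : C) (he : ‖e‖ = 1) : ⟪conjC e ζ, e⟫ = ⟪ζ, e⟫ := by
  simp only [conjC, inner_sub_left, real_inner_smul_left, real_inner_self_eq_norm_sq, he]
  ring

lemma norm_conjC (e ζ : C) (he : ‖e‖ = 1) : ‖conjC e ζ‖ = ‖ζ‖ := by
  have h : ‖conjC e ζ‖ ^ 2 = ‖ζ‖ ^ 2 := by
    simp only [conjC]
    rw [norm_sub_sq_real]
    simp only [norm_smul, real_inner_smul_left, real_inner_self_eq_norm_sq, he,
      Real.norm_eq_abs]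
    rw [real_inner_comm e ζ, mul_pow, sq_abs]
    ring
  calc ‖conjC e ζ‖ = Real.sqrt (‖conjC e ζ‖ ^ 2) := (Real.sqrt_sq (norm_nonneg _)).symm
    _ = Real.sqrt (‖ζ‖ ^ 2) := by rw [h]
    _ = ‖ζ‖ := Real.sqrt_sq (norm_nonneg _)

lemma height_sigmaAct (e : C) (J : C →ₗ[ℝ] V →ₗ[ℝ] V) (he : ‖e‖ = 1)
    (hnorm : ∀ (ζ : C) (v : V), ‖J ζ v‖ = ‖ζ‖ * ‖v‖) (p : C × V) (hp : p.1 ≠ 0) :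
    heightD e (sigmaAct e J p) = (‖p.1‖ ^ 2)⁻¹ * heightD e p := by
  have h0 : ‖p.1‖ ≠ 0 := norm_ne_zero_iff.mpr hp
  simp only [heightD, sigmaAct, norm_neg, hnorm, cinvC, norm_smul, real_inner_smul_left,
    inner_conjC e _ he, norm_conjC e _ he, Real.norm_eq_abs]
  rw [abs_of_nonneg (by positivity : (0:ℝ) ≤ (‖p.1‖ ^ 2)⁻¹)]
  field_simp

end Aux

/-- for `z ∈ D` and `g = n₁ σ m a_t n₂ ∈ G ∖ G_∞`, one has
`height(z) = (ρ(z, g⁻¹∞)/R(g))⁴ · height(gz)` with `R(g) = t^{-1/4}` and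
`g⁻¹∞ = n₂⁻¹ 0 = (¼|X₂|² − Z₂, −X₂)`; consequently `z` lies in the interior of
the isometric sphere `I(g)` iff `height(gz) > height(z)`. -/
theorem height_transformation
    {C V : Type*} [NormedAddCommGroup C] [InnerProductSpace ℝ C] [FiniteDimensional ℝ C]
    [NormedAddCommGroup V] [InnerProductSpace ℝ V] [FiniteDimensional ℝ V]
    (e : C) (J : C →ₗ[ℝ] V →ₗ[ℝ] V) (he : ‖e‖ = 1)
    (hJe : ∀ v : V, J e v = v)
    (hnorm : ∀ (ζ : C) (v : V), ‖J ζ v‖ = ‖ζ‖ * ‖v‖)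
    (hJ2 : ∀ (ζ η : C) (v : V), ∃ τ : C, J ζ (J η v) = J τ v)
    (β₂ : V → V → C)
    (hβ : ∀ (v u : V) (ζ : C), ⟪β₂ v u, ζ⟫ = ⟪J ζ u, v⟫)
    (t : ℝ) (ht : 0 < t)
    (Z₁ Z₂ : C) (X₁ X₂ : V) (hZ₁ : ⟪Z₁, e⟫ = 0) (hZ₂ : ⟪Z₂, e⟫ = 0)
    (φ : C →ₗ[ℝ] C) (ψ : V →ₗ[ℝ] V)
    (hφ : ∀ ζ : C, ‖φ ζ‖ = ‖ζ‖) (hψ : ∀ v : V, ‖ψ v‖ = ‖v‖) (hφe : φ e = e)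
    (hm : ∀ (ζ : C) (v : V), ψ (J ζ v) = J (φ ζ) (ψ v))
    (g : C × V → C × V)
    (hg : ∀ p : C × V,
      g p = nAct e β₂ Z₁ X₁ (sigmaAct e J (mAct φ ψ (aAct t (nAct e β₂ Z₂ X₂ p)))))
    (c : C × V) (hc : c = (((1/4) * ‖X₂‖ ^ 2) • e - Z₂, - X₂))
    (z : C × V) (hz : (1/4) * ‖z.2‖ ^ 2 < ⟪z.1, e⟫) :
    heightD e z = (cyganD e β₂ z c / t ^ (-(1/4) : ℝ)) ^ 4 * heightD e (g z) ∧
    (cyganD e β₂ z c < t ^ (-(1/4) : ℝ) ↔ heightD e z < heightD e (g z)) := by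
  have hzpos : 0 < heightD e z := by simpa [heightD, sub_pos] using hz
  set w : C := ((1/4) * ‖X₂‖ ^ 2) • e + Z₂ + z.1 + (1/2 : ℝ) • β₂ z.2 X₂ with hw
  have hβneg : β₂ z.2 (-X₂) = - β₂ z.2 X₂ := by
    apply ext_inner_right ℝ
    intro ζ
    rw [hβ, map_neg, inner_neg_left, inner_neg_left, hβ]
  have hhc : heightD e c = 0 := by
    simp [heightD, hc, inner_sub_left, real_inner_smul_left, hZ₂,
      real_inner_self_eq_norm_sq, he]
  have hcyg : cyganD e β₂ z c = Real.sqrt ‖w‖ := by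
    simp only [cyganD, hhc, sub_zero, abs_of_pos hzpos]
    congr 2
    simp only [hc, imC, heightD, hβneg, inner_sub_left, real_inner_smul_left,
      real_inner_self_eq_norm_sq, he, hZ₂, hw, norm_neg]
    match_scalars <;> ring
  have hwe : ⟪w, e⟫ = heightD e z + (1/4) * ‖X₂ + z.2‖ ^ 2 := by
    simp only [hw, inner_add_left, real_inner_smul_left, hZ₂, hβ, hJe,
      real_inner_self_eq_norm_sq, he, heightD]
    rw [norm_add_sq_real]
    ring
  have hwpos : 0 < ‖w‖ := by
    have h1 : 0 < ⟪w, e⟫ := by rw [hwe]; positivity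
    have h2 : ⟪w, e⟫ ≤ ‖w‖ * ‖e‖ := real_inner_le_norm w e
    rw [he, mul_one] at h2
    linarith
  have hwne : w ≠ 0 := by intro h; rw [h, norm_zero] at hwpos; exact lt_irrefl 0 hwpos
  have hn2 : nAct e β₂ Z₂ X₂ z = (w, X₂ + z.2) := by simp [nAct, hw]
  set r : C × V := mAct φ ψ (aAct t (nAct e β₂ Z₂ X₂ z)) with hr
  have hr1 : r.1 = t • φ w := by simp [hr, mAct, aAct, hn2, map_smul]
  have hr2 : r.2 = ψ (Real.sqrt t • (X₂ + z.2)) := by simp [hr, mAct, aAct, hn2]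
  have hr1norm : ‖r.1‖ = t * ‖w‖ := by
    rw [hr1, norm_smul, hφ, Real.norm_eq_abs, abs_of_pos ht]
  have hr1ne : r.1 ≠ 0 := by
    rw [← norm_ne_zero_iff, hr1norm]; positivity
  have hrh : heightD e r = t * heightD e z := by
    have h1 : ⟪r.1, e⟫ = t * ⟪w, e⟫ := by
      have h0 := inner_map_of_norm hφ w e
      rw [hφe] at h0
      rw [hr1, real_inner_smul_left, h0]
    have h2 : ‖r.2‖ ^ 2 = t * ‖X₂ + z.2‖ ^ 2 := by
      rw [hr2, hψ, norm_smul, Real.norm_eq_abs, abs_of_nonneg (Real.sqrt_nonneg t),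
        mul_pow, Real.sq_sqrt ht.le]
    simp only [heightD] at hwe ⊢
    rw [h1, h2, hwe]
    ring
  have hgz : heightD e (g z) = (t * ‖w‖ ^ 2)⁻¹ * heightD e z := by
    rw [hg z, height_nAct e J he hJe β₂ hβ Z₁ X₁ hZ₁, ← hr,
      height_sigmaAct e J he hnorm r hr1ne, hr1norm, hrh]
    have h1 : (0:ℝ) < t * ‖w‖ ^ 2 := by positivity
    field_simp
  have hRpos : (0:ℝ) < t ^ (-(1/4) : ℝ) := Real.rpow_pos_of_pos ht _
  have hR4 : (t ^ (-(1/4) : ℝ)) ^ 4 = t⁻¹ := by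
    rw [← Real.rpow_natCast (t ^ (-(1/4):ℝ)) 4, ← Real.rpow_mul ht.le]
    norm_num [Real.rpow_neg_one]
  have hcyg4 : cyganD e β₂ z c ^ 4 = ‖w‖ ^ 2 := by
    rw [hcyg, show (4:ℕ) = 2*2 from rfl, pow_mul, Real.sq_sqrt (norm_nonneg w)]
  have hquot : (cyganD e β₂ z c / t ^ (-(1/4) : ℝ)) ^ 4 = t * ‖w‖ ^ 2 := by
    rw [div_pow, hcyg4, hR4, div_eq_mul_inv, inv_inv]
    ring
  have hmain : heightD e z = (cyganD e β₂ z c / t ^ (-(1/4) : ℝ)) ^ 4 * heightD e (g z) := by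
    rw [hquot, hgz]
    have h1 : (t * ‖w‖ ^ 2) ≠ 0 := by positivity
    field_simp
  refine ⟨hmain, ?_⟩
  have hgzpos : 0 < heightD e (g z) := by
    rw [hgz]; positivity
  have hcygnn : 0 ≤ cyganD e β₂ z c := by rw [hcyg]; exact Real.sqrt_nonneg _
  have hiff1 : cyganD e β₂ z c < t ^ (-(1/4) : ℝ) ↔ ‖w‖ ^ 2 < t⁻¹ := by
    rw [← pow_lt_pow_iff_left₀ hcygnn hRpos.le (by norm_num : (4:ℕ) ≠ 0), hcyg4, hR4]
  have hiff2 : ‖w‖ ^ 2 < t⁻¹ ↔ t * ‖w‖ ^ 2 < 1 := by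
    rw [← mul_lt_mul_iff_right₀ ht, mul_inv_cancel₀ ht.ne']
  have heq : heightD e z = (t * ‖w‖ ^ 2) * heightD e (g z) := by
    rw [hgz]
    have h1 : (t * ‖w‖ ^ 2) ≠ 0 := by positivity
    field_simp
  have hiff3 : t * ‖w‖ ^ 2 < 1 ↔ heightD e z < heightD e (g z) := by
    rw [heq]
    exact (mul_lt_iff_lt_one_left hgzpos).symm
  rw [hiff1, hiff2, hiff3]

end
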